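/- Let A = (A, B, β, T) be a relative Rota-Baxter group and (K, L, α, S) a relative Rota-Baxter subgroup of A with S: K → L surjective, such that K is contained in A^β (the subgroup of A generated by the commutator subgroup A' and all elements β_b(a)a⁻¹) and L ⊆ B. Then for every homomorphism (ψ, η): A → C = (ℂ^×, ℂ^×, trivial, id) of relative Rota-Baxter groups, the restrictions ψ|_K and η|_L are trivial. -/
import Mathlib


/-- Let `𝒜 = (A, B, β, T)` be a relative Rota-Baxter group and
`(K, L, β|, T|)` a relative Rota-Baxter subgroup with `T| : K → L` surjective, such that
`K ⊆ A^β`, the subgroup generated by the commutator subgroup of `A` together with all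
elements `β_b(a) a⁻¹`. Then every homomorphism `(ψ, η) : 𝒜 → 𝒞 = (ℂˣ, ℂˣ, trivial, id)`
restricts to the trivial homomorphism on `(K, L)`. -/
theorem restriction_trivial_of_subset_commutator {A B : Type*} [Group A] [Group B]
    (β : B →* MulAut A) (T : A → B)
    (hT : ∀ a₁ a₂ : A, T a₁ * T a₂ = T (a₁ * β (T a₁) a₂))
    (K : Subgroup A) (L : Subgroup B)
    (hβKL : ∀ ℓ ∈ L, ∀ k ∈ K, β ℓ k ∈ K)
    (hTKL : ∀ k ∈ K, T k ∈ L)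
    (hSsurj : ∀ ℓ ∈ L, ∃ k ∈ K, T k = ℓ)
    (hKsub : (K : Set A) ⊆
      (Subgroup.closure ({x : A | ∃ a b : A, x = a * b * a⁻¹ * b⁻¹} ∪
        {x : A | ∃ (a : A) (b : B), x = β b a * a⁻¹}) : Subgroup A))
    (ψ : A →* ℂˣ) (η : B →* ℂˣ)
    (hcomm₁ : ∀ a : A, η (T a) = ψ a)
    (hcomm₂ : ∀ (b : B) (a : A), ψ (β b a) = ψ a) :
    (∀ k ∈ K, ψ k = 1) ∧ (∀ ℓ ∈ L, η ℓ = 1) := by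
  have hker : (Subgroup.closure ({x : A | ∃ a b : A, x = a * b * a⁻¹ * b⁻¹} ∪
      {x : A | ∃ (a : A) (b : B), x = β b a * a⁻¹}) : Subgroup A) ≤ ψ.ker := by
    rw [Subgroup.closure_le]
    rintro x (⟨a, b, rfl⟩ | ⟨a, b, rfl⟩) <;>
      simp [MonoidHom.mem_ker, hcomm₂, mul_comm]
  have hK : ∀ k ∈ K, ψ k = 1 := fun k hk => hker (hKsub hk)
  refine ⟨hK, fun ℓ hℓ => ?_⟩
  obtain ⟨k, hk, rfl⟩ := hSsurj ℓ hℓ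
  rw [hcomm₁, hK k hk]
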